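/- Let n, ℓ, w be positive integers and let γ > 0, δ ∈ (0,1] be real numbers with e^{−n} ≤ δ. Let INV ⊆ ({0,1}^n)^ℓ with |INV| ≥ γ·2^{nℓ}, and assume ℓ/w < γ − (1 − δ + e^{−n})^ℓ. For y ∈ {0,1}^n let c(y) = |{(i, ȳ) : i ∈ {1,…,ℓ}, ȳ ∈ INV, ȳ_i = y}|, and let V = {y ∈ {0,1}^n : c(y) ≥ (1/w)·ℓ·2^{n(ℓ−1)}}. Then the complement of V in {0,1}^n has fewer than (δ − e^{−n})·2^n elements. -/

import Mathlib

open scoped Classical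

theorem stmt2 (n ℓ w : ℕ) (hn : 0 < n) (hℓ : 0 < ℓ) (hw : 0 < w)
    (γ δ : ℝ) (hγ : 0 < γ) (hδ : δ ∈ Set.Ioc (0 : ℝ) 1)
    (hδe : Real.exp (-(n : ℝ)) ≤ δ)
    (INV : Finset (Fin ℓ → (Fin n → ZMod 2)))
    (hINV : γ * 2 ^ (n * ℓ) ≤ (INV.card : ℝ))
    (hlw : (ℓ : ℝ) / (w : ℝ) < γ - (1 - δ + Real.exp (-(n : ℝ))) ^ ℓ)
    (c : (Fin n → ZMod 2) → ℕ)
    (hc : ∀ y, c y = (Finset.univ.filter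
        (fun p : Fin ℓ × (Fin ℓ → (Fin n → ZMod 2)) => p.2 ∈ INV ∧ p.2 p.1 = y)).card)
    (V : Finset (Fin n → ZMod 2))
    (hV : V = Finset.univ.filter
        (fun y : Fin n → ZMod 2 => (1 / (w : ℝ)) * ℓ * 2 ^ (n * (ℓ - 1)) ≤ (c y : ℝ))) :
    ((Vᶜ).card : ℝ) < (δ - Real.exp (-(n : ℝ))) * 2 ^ n := by
  classical
  by_contra hcon
  push_neg at hcon
  set E := Real.exp (-(n : ℝ)) with hE
  have hEpos : 0 < E := Real.exp_pos _
  -- combinatorial bound: |INV| ≤ |V|^ℓ + ∑_{y∈Vᶜ} c y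
  have hsplit : INV.card ≤ V.card ^ ℓ + ∑ y ∈ Vᶜ, c y := by
    have h1 : (INV.filter (fun f => ∀ i, f i ∈ V)).card ≤ V.card ^ ℓ := by
      have hsub : INV.filter (fun f => ∀ i, f i ∈ V) ⊆
          Fintype.piFinset (fun _ : Fin ℓ => V) := by
        intro f hf
        rw [Finset.mem_filter] at hf
        simp [Fintype.mem_piFinset, hf.2]
      calc (INV.filter (fun f => ∀ i, f i ∈ V)).card
          ≤ (Fintype.piFinset (fun _ : Fin ℓ => V)).card := Finset.card_le_card hsub
        _ = V.card ^ ℓ := by simp [Fintype.card_piFinset]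
    have hsum : ∑ y ∈ Vᶜ, c y = (Finset.univ.filter
        (fun p : Fin ℓ × (Fin ℓ → (Fin n → ZMod 2)) => p.2 ∈ INV ∧ p.2 p.1 ∈ Vᶜ)).card := by
      simp only [hc, Finset.card_filter]
      rw [Finset.sum_comm]
      refine Finset.sum_congr rfl fun p _ => ?_
      by_cases hp : p.2 ∈ INV
      · simp only [hp, true_and]
        rw [Finset.sum_ite_eq]
      · simp [hp]
    have h2 : (INV.filter (fun f => ¬ ∀ i, f i ∈ V)).card ≤ ∑ y ∈ Vᶜ, c y := by
      rw [hsum]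
      set pick : (Fin ℓ → (Fin n → ZMod 2)) → Fin ℓ :=
        fun f => if h : ∃ i, f i ∉ V then h.choose else ⟨0, hℓ⟩ with hpick
      apply Finset.card_le_card_of_injOn (fun f => (pick f, f))
      · intro f hf
        rw [Finset.mem_coe, Finset.mem_filter] at hf
        obtain ⟨hfI, hfn⟩ := hf
        push_neg at hfn
        have hx : pick f = hfn.choose := dif_pos hfn
        simp only [Finset.mem_coe, Finset.mem_filter, Finset.mem_univ, true_and]
        exact ⟨hfI, by rw [hx]; exact Finset.mem_compl.2 hfn.choose_spec⟩
      · intro a _ b _ hab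
        exact congrArg Prod.snd hab
    have htot := Finset.card_filter_add_card_filter_not
      (s := INV) (p := fun f => ∀ i, f i ∈ V)
    rw [← htot]
    exact Nat.add_le_add h1 h2
  -- numeric part
  have hcard : Fintype.card (Fin n → ZMod 2) = 2 ^ n := by simp
  have hN : (0:ℝ) < 2 ^ (n*ℓ) := by positivity
  have hVadd : (V.card : ℝ) + ((Vᶜ).card : ℝ) = 2 ^ n := by
    have := Finset.card_add_card_compl V
    rw [hcard] at this
    exact_mod_cast this
  have hVle : (V.card : ℝ) ≤ (1 - δ + E) * 2 ^ n := by nlinarith [hcon]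
  have hVpow : (V.card : ℝ) ^ ℓ ≤ (1 - δ + E) ^ ℓ * 2 ^ (n*ℓ) := by
    have h0 : (0:ℝ) ≤ (V.card : ℝ) := Nat.cast_nonneg _
    calc (V.card : ℝ) ^ ℓ ≤ ((1 - δ + E) * 2 ^ n) ^ ℓ := pow_le_pow_left₀ h0 hVle ℓ
      _ = (1 - δ + E) ^ ℓ * 2 ^ (n*ℓ) := by rw [mul_pow, ← pow_mul]
  have hexp : n + n * (ℓ - 1) = n * ℓ := by
    rcases Nat.exists_eq_succ_of_ne_zero hℓ.ne' with ⟨k, rfl⟩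
    rw [Nat.succ_sub_one, Nat.mul_succ]
    omega
  have hsumle : (∑ y ∈ Vᶜ, (c y : ℝ)) ≤ ((ℓ : ℝ) / w) * 2 ^ (n*ℓ) := by
    have hB : ∀ y ∈ Vᶜ, (c y : ℝ) ≤ (1 / (w:ℝ)) * ℓ * 2 ^ (n * (ℓ - 1)) := by
      intro y hy
      rw [Finset.mem_compl, hV, Finset.mem_filter] at hy
      push_neg at hy
      exact le_of_lt (hy (Finset.mem_univ _))
    have hle := Finset.sum_le_card_nsmul (Vᶜ) _ _ hB
    have hcle : ((Vᶜ).card : ℝ) ≤ 2 ^ n := by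
      have := Finset.card_le_univ (Vᶜ)
      rw [hcard] at this
      exact_mod_cast this
    have hBpos : (0:ℝ) ≤ (1 / (w:ℝ)) * ℓ * 2 ^ (n * (ℓ - 1)) := by positivity
    calc (∑ y ∈ Vᶜ, (c y : ℝ))
        ≤ ((Vᶜ).card : ℝ) * ((1 / (w:ℝ)) * ℓ * 2 ^ (n * (ℓ - 1))) := by
          simpa [nsmul_eq_mul] using hle
      _ ≤ (2:ℝ) ^ n * ((1 / (w:ℝ)) * ℓ * 2 ^ (n * (ℓ - 1))) :=
          mul_le_mul_of_nonneg_right hcle hBpos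
      _ = ((ℓ : ℝ) / w) * ((2:ℝ) ^ n * 2 ^ (n * (ℓ - 1))) := by ring
      _ = ((ℓ : ℝ) / w) * 2 ^ (n*ℓ) := by rw [← pow_add, hexp]
  have hcast : (INV.card : ℝ) ≤ (V.card : ℝ) ^ ℓ + ∑ y ∈ Vᶜ, (c y : ℝ) := by
    have : (INV.card : ℝ) ≤ ((V.card ^ ℓ + ∑ y ∈ Vᶜ, c y : ℕ) : ℝ) := by
      exact_mod_cast hsplit
    push_cast at this
    exact this
  have hfin : γ * 2 ^ (n*ℓ) ≤ ((1 - δ + E) ^ ℓ + (ℓ : ℝ) / w) * 2 ^ (n*ℓ) := by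
    nlinarith [hINV, hVpow, hsumle, hcast]
  have : γ ≤ (1 - δ + E) ^ ℓ + (ℓ : ℝ) / w := le_of_mul_le_mul_right hfin hN
  linarith
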